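/- For the ECO-system with axiom (1) and rule (k) ↝ (k-1)^{k-1}(k+1), the number f_{n,k} of nodes at level n labeled k equals the number of involutions of {1,...,n} having exactly k-1 fixed points, and the bivariate exponential generating function is ∑_{n,k} f_{n,k} u^k z^n/n! = u·exp(zu + z²/2); equivalently the counting sequence f_n satisfies f_{n+1} = f_n + n·f_{n-1} (the involution recurrence). -/

import Mathlib

section Aux
open Equiv Equiv.Perm Finset

variable {α : Type*} [DecidableEq α] [Fintype α]

lemma card_filter_option (p : Option α → Prop) [DecidablePred p] :
    (univ.filter p).card = (if p none then 1 else 0) + (univ.filter fun x => p (some x)).card := by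
  rw [Finset.card_filter, Finset.card_filter, Fintype.sum_option]

lemma invol_none (τ : Perm α) :
    (decomposeOption.symm (none, τ)) * (decomposeOption.symm (none, τ)) = 1 ↔ τ * τ = 1 := by
  simp only [Perm.decomposeOption_symm_apply, swap_self]
  constructor
  · intro h
    ext x
    have := Equiv.ext_iff.1 h (some x)
    simpa using this
  · intro h
    ext x
    cases x with
    | none => simp
    | some x =>
      have := Equiv.ext_iff.1 h x
      simp only [Perm.coe_mul, Function.comp_apply, Perm.coe_one, id] at this ⊢
      simp [this]

set_option linter.unusedSectionVars false

lemma fp_none (τ : Perm α) :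
    (univ.filter fun x => (decomposeOption.symm (none, τ)) x = x).card
      = (univ.filter fun x => τ x = x).card + 1 := by
  rw [card_filter_option]
  simp [Perm.decomposeOption_symm_apply, add_comm]

lemma symm_some_apply (τ : Perm α) (j x : α) :
    (decomposeOption.symm (some j, τ)) (some x)
      = if τ x = j then none else some (τ x) := by
  simp only [Perm.decomposeOption_symm_apply, Perm.coe_mul, Function.comp_apply,
    optionCongr_apply, Option.map_some]
  by_cases h : τ x = j
  · simp [h]
  · rw [swap_apply_of_ne_of_ne] <;> simp [h]

lemma symm_some_none (τ : Perm α) (j : α) :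
    (decomposeOption.symm (some j, τ)) none = some j := by
  simp [Perm.decomposeOption_symm_apply]

lemma invol_some (τ : Perm α) (j : α) :
    (decomposeOption.symm (some j, τ)) * (decomposeOption.symm (some j, τ)) = 1
      ↔ (τ * τ = 1 ∧ τ j = j) := by
  set σ := decomposeOption.symm (some j, τ) with hσ
  constructor
  · intro h
    have hj : τ j = j := by
      have h1 := Equiv.ext_iff.1 h none
      rw [Perm.coe_mul, Function.comp_apply, symm_some_none, symm_some_apply] at h1
      by_contra hne
      rw [if_neg hne] at h1
      simp at h1
    refine ⟨?_, hj⟩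
    ext x
    have h1 := Equiv.ext_iff.1 h (some x)
    rw [Perm.coe_mul, Function.comp_apply, symm_some_apply] at h1
    by_cases hx : τ x = j
    · have : x = j := by
        have := τ.injective (hx.trans hj.symm)
        simpa using this
      simp [Perm.coe_mul, this, hj]
    · rw [if_neg hx, symm_some_apply] at h1
      by_cases hx2 : τ (τ x) = j
      · rw [if_pos hx2] at h1; simp at h1
      · rw [if_neg hx2] at h1
        simpa using h1
  · rintro ⟨h, hj⟩
    have h' : ∀ x, τ (τ x) = x := fun x => Equiv.ext_iff.1 h x
    ext x
    cases x with
    | none =>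
      rw [Perm.coe_mul, Function.comp_apply, symm_some_none, symm_some_apply, if_pos hj]
      rfl
    | some x =>
      rw [Perm.coe_mul, Function.comp_apply, symm_some_apply]
      by_cases hx : τ x = j
      · rw [if_pos hx, symm_some_none]
        have : x = j := by simpa using τ.injective (hx.trans hj.symm)
        simp [this]
      · have hne : τ (τ x) ≠ j := by
          rw [h']
          intro hc
          exact hx (by rw [hc, hj])
        rw [if_neg hx, symm_some_apply, if_neg hne, h']
        rfl

lemma fp_some (τ : Perm α) (j : α) (hj : τ j = j) :
    (univ.filter fun x => (decomposeOption.symm (some j, τ)) x = x).card + 1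
      = (univ.filter fun x => τ x = x).card := by
  rw [card_filter_option]
  rw [if_neg (by rw [symm_some_none]; simp)]
  have hset : (univ.filter fun x => (decomposeOption.symm (some j, τ)) (some x) = some x)
      = (univ.filter fun x => τ x = x).erase j := by
    ext x
    simp only [Finset.mem_filter, Finset.mem_erase, Finset.mem_univ, true_and]
    rw [symm_some_apply]
    constructor
    · intro h
      by_cases hx : τ x = j
      · rw [if_pos hx] at h; simp at h
      · rw [if_neg hx] at h
        have hxx : τ x = x := by simpa using h
        exact ⟨fun hc => hx (by rw [hc, hj]), hxx⟩
    · rintro ⟨hne, hxx⟩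
      rw [if_neg (by rw [hxx]; exact hne)]
      rw [hxx]
  rw [hset, Finset.card_erase_of_mem (by simp [hj]), zero_add]
  have hmem : j ∈ univ.filter fun x => τ x = x := by simp [hj]
  have := Finset.card_pos.2 ⟨j, hmem⟩
  omega

lemma count_option (k : ℕ) :
    (univ.filter fun σ : Perm (Option α) =>
        σ * σ = 1 ∧ (univ.filter fun x => σ x = x).card = k).card
      = (k+1) * (univ.filter fun τ : Perm α =>
            τ * τ = 1 ∧ (univ.filter fun x => τ x = x).card = k+1).card
        + (if k = 0 then 0 else (univ.filter fun τ : Perm α =>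
            τ * τ = 1 ∧ (univ.filter fun x => τ x = x).card = k-1).card) := by
  classical
  rw [Finset.univ_perm_option, Finset.filter_map, Finset.card_map]
  rw [Finset.card_filter]
  rw [Fintype.sum_prod_type]
  rw [Fintype.sum_option]
  have hnone : (∑ τ : Perm α, if
        (decomposeOption.symm ((none : Option α), τ)) * (decomposeOption.symm (none, τ)) = 1 ∧
        (univ.filter fun x => (decomposeOption.symm ((none : Option α), τ)) x = x).card = k
      then 1 else 0)
      = (if k = 0 then 0 else (univ.filter fun τ : Perm α =>
            τ * τ = 1 ∧ (univ.filter fun x => τ x = x).card = k-1).card) := by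
    rcases Nat.eq_zero_or_pos k with hk | hk
    · subst hk
      simp only [if_pos rfl]
      apply Finset.sum_eq_zero
      intro τ _
      rw [if_neg]
      rintro ⟨-, hfp⟩
      rw [fp_none] at hfp
      omega
    · rw [if_neg (by omega), Finset.card_filter]
      apply Finset.sum_congr rfl
      intro τ _
      refine if_congr ?_ rfl rfl
      rw [invol_none, fp_none]
      constructor
      · rintro ⟨h1, h2⟩; exact ⟨h1, by omega⟩
      · rintro ⟨h1, h2⟩; exact ⟨h1, by omega⟩
  have hsome : (∑ j : α, ∑ τ : Perm α, if
        (decomposeOption.symm (some j, τ)) * (decomposeOption.symm (some j, τ)) = 1 ∧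
        (univ.filter fun x => (decomposeOption.symm (some j, τ)) x = x).card = k
      then 1 else 0)
      = (k+1) * (univ.filter fun τ : Perm α =>
            τ * τ = 1 ∧ (univ.filter fun x => τ x = x).card = k+1).card := by
    have step1 : ∀ (j : α) (τ : Perm α),
        ((decomposeOption.symm (some j, τ)) * (decomposeOption.symm (some j, τ)) = 1 ∧
          (univ.filter fun x => (decomposeOption.symm (some j, τ)) x = x).card = k)
        ↔ ((τ * τ = 1 ∧ (univ.filter fun x => τ x = x).card = k+1) ∧ τ j = j) := by
      intro j τ
      rw [invol_some]
      constructor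
      · rintro ⟨⟨h1, hj⟩, h2⟩
        have := fp_some τ j hj
        exact ⟨⟨h1, by omega⟩, hj⟩
      · rintro ⟨⟨h1, h2⟩, hj⟩
        have := fp_some τ j hj
        exact ⟨⟨h1, hj⟩, by omega⟩
    calc (∑ j : α, ∑ τ : Perm α, if
        (decomposeOption.symm (some j, τ)) * (decomposeOption.symm (some j, τ)) = 1 ∧
        (univ.filter fun x => (decomposeOption.symm (some j, τ)) x = x).card = k
      then 1 else 0)
        = ∑ j : α, ∑ τ : Perm α, if
            ((τ * τ = 1 ∧ (univ.filter fun x => τ x = x).card = k+1) ∧ τ j = j)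
          then 1 else 0 := by
          apply Finset.sum_congr rfl; intro j _
          apply Finset.sum_congr rfl; intro τ _
          exact if_congr (step1 j τ) rfl rfl
      _ = ∑ τ : Perm α, ∑ j : α, if
            ((τ * τ = 1 ∧ (univ.filter fun x => τ x = x).card = k+1) ∧ τ j = j)
          then 1 else 0 := Finset.sum_comm
      _ = ∑ τ : Perm α, if (τ * τ = 1 ∧ (univ.filter fun x => τ x = x).card = k+1)
            then (k+1) else 0 := by
          apply Finset.sum_congr rfl; intro τ _
          by_cases hQ : (τ * τ = 1 ∧ (univ.filter fun x => τ x = x).card = k+1)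
          · rw [if_pos hQ]
            simp only [hQ, true_and]
            rw [← hQ.2, Finset.card_filter]
          · simp [hQ]
      _ = (k+1) * (univ.filter fun τ : Perm α =>
            τ * τ = 1 ∧ (univ.filter fun x => τ x = x).card = k+1).card := by
          rw [Finset.card_filter, Finset.mul_sum]
          apply Finset.sum_congr rfl; intro τ _
          by_cases hQ : (τ * τ = 1 ∧ (univ.filter fun x => τ x = x).card = k+1) <;> simp [hQ]
  simp only [Function.comp_apply, Equiv.coe_toEmbedding] at *
  rw [hnone, hsome]
  ring

section transfer
variable {β γ : Type*} [DecidableEq β] [Fintype β] [DecidableEq γ] [Fintype γ]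

lemma fp_permCongr (e : β ≃ γ) (σ : Perm β) :
    (univ.filter fun x : γ => (e.permCongr σ) x = x).card
      = (univ.filter fun y : β => σ y = y).card := by
  apply Finset.card_bij' (fun x _ => e.symm x) (fun y _ => e y)
  · intro x hx
    rw [Finset.mem_filter] at hx
    simp only [Finset.mem_filter, Finset.mem_univ, true_and, Equiv.permCongr_apply] at hx ⊢
    rw [show σ (e.symm x) = e.symm x from e.injective (by simpa using hx)]
  · intro y hy
    rw [Finset.mem_filter]
    simp only [Finset.mem_filter, Finset.mem_univ, true_and, Equiv.permCongr_apply] at hy ⊢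
    simp [hy]
  · intro x _; simp
  · intro y _; simp

lemma invol_permCongr (e : β ≃ γ) (σ : Perm β) :
    (e.permCongr σ) * (e.permCongr σ) = 1 ↔ σ * σ = 1 := by
  constructor
  · intro h
    ext y
    have := Equiv.ext_iff.1 h (e y)
    simp only [Perm.coe_mul, Function.comp_apply, Equiv.permCongr_apply, Perm.coe_one, id] at this ⊢
    rw [Equiv.symm_apply_apply] at this
    exact e.injective (by simpa using this)
  · intro h
    ext x
    have := Equiv.ext_iff.1 h (e.symm x)
    simp only [Perm.coe_mul, Function.comp_apply, Equiv.permCongr_apply, Perm.coe_one, id] at this ⊢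
    rw [Equiv.symm_apply_apply, this, Equiv.apply_symm_apply]

lemma count_congr (e : β ≃ γ) (k : ℕ) :
    (univ.filter fun σ : Perm β =>
        σ * σ = 1 ∧ (univ.filter fun x => σ x = x).card = k).card
      = (univ.filter fun σ : Perm γ =>
        σ * σ = 1 ∧ (univ.filter fun x => σ x = x).card = k).card := by
  apply Finset.card_bij' (fun σ _ => e.permCongr σ) (fun σ _ => e.symm.permCongr σ)
  · intro σ hσ
    simp only [Finset.mem_filter, Finset.mem_univ, true_and] at hσ ⊢
    exact ⟨(invol_permCongr e σ).2 hσ.1, by rw [fp_permCongr]; exact hσ.2⟩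
  · intro σ hσ
    simp only [Finset.mem_filter, Finset.mem_univ, true_and] at hσ ⊢
    exact ⟨(invol_permCongr e.symm σ).2 hσ.1, by rw [fp_permCongr]; exact hσ.2⟩
  · intro σ _; ext x; simp
  · intro σ _; ext x; simp

end transfer

/-- involution count as Nat.card -/
lemma natCard_eq_filter (n k : ℕ) :
    Nat.card {σ : Equiv.Perm (Fin n) // σ * σ = 1 ∧
        (Finset.univ.filter fun x => σ x = x).card = k}
      = (univ.filter fun σ : Perm (Fin n) =>
          σ * σ = 1 ∧ (univ.filter fun x => σ x = x).card = k).card := by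
  rw [Nat.card_eq_fintype_card, Fintype.card_subtype]

lemma count_fin_zero (k : ℕ) :
    (univ.filter fun σ : Perm (Fin 0) =>
        σ * σ = 1 ∧ (univ.filter fun x => σ x = x).card = k).card
      = if k = 0 then 1 else 0 := by
  have h1 : ∀ σ : Perm (Fin 0), σ = 1 := fun σ => Equiv.ext (fun x => x.elim0)
  have hfp : ∀ σ : Perm (Fin 0), (univ.filter fun x => σ x = x).card = 0 := fun σ => by
    simp [Finset.univ_eq_empty]
  by_cases hk : k = 0
  · subst hk
    rw [if_pos rfl]
    rw [Finset.filter_true_of_mem (fun σ _ => ⟨by rw [h1 σ]; simp, hfp σ⟩)]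
    simp [Finset.card_univ]
  · rw [if_neg hk, Finset.card_eq_zero, Finset.filter_eq_empty_iff]
    rintro σ - ⟨-, h⟩
    exact hk ((hfp σ) ▸ h.symm)

lemma count_fin_succ (n k : ℕ) :
    (univ.filter fun σ : Perm (Fin (n+1)) =>
        σ * σ = 1 ∧ (univ.filter fun x => σ x = x).card = k).card
      = (k+1) * (univ.filter fun τ : Perm (Fin n) =>
            τ * τ = 1 ∧ (univ.filter fun x => τ x = x).card = k+1).card
        + (if k = 0 then 0 else (univ.filter fun τ : Perm (Fin n) =>
            τ * τ = 1 ∧ (univ.filter fun x => τ x = x).card = k-1).card) := by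
  rw [count_congr (finSuccEquivLast (n := n)) k]
  exact count_option k

section fLemmas
variable (f : ℕ → ℕ → ℕ)
  (h0 : ∀ k, f 0 k = if k = 1 then 1 else 0)
  (hstep : ∀ n k, f (n + 1) k = k * f n (k + 1) + (if 1 ≤ k then f n (k - 1) else 0))
include h0 hstep

lemma f_zero : ∀ n, f n 0 = 0 := by
  intro n
  cases n with
  | zero => simp [h0]
  | succ n => simp [hstep]

lemma f_vanish : ∀ n k, n + 2 ≤ k → f n k = 0 := by
  intro n
  induction n with
  | zero =>
    intro k hk
    rw [h0, if_neg (by omega)]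
  | succ n ih =>
    intro k hk
    rw [hstep]
    rw [ih (k+1) (by omega), ih (k-1) (by omega)]
    simp

lemma f_key : ∀ n k, k * f (n+1) (k+1) = (n+1) * f n k := by
  intro n
  induction n with
  | zero =>
    intro k
    rw [hstep 0 (k+1)]
    simp only [h0, show (1:ℕ) ≤ k+1 from by omega, if_true, Nat.add_sub_cancel]
    by_cases hk : k = 1 <;> simp [hk]
  | succ n ih =>
    intro k
    cases k with
    | zero => simp [f_zero f h0 hstep]
    | succ m =>
      have h1 := hstep (n+1) (m+2)
      have h2 := ih (m+2)
      have h3 := hstep n (m+1)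
      have h4 := ih m
      simp only [show (1:ℕ) ≤ m + 2 from by omega, if_true, show m+2-1 = m+1 from rfl] at h1
      simp only [show (1:ℕ) ≤ m + 1 from by omega, if_true, show m+1-1 = m from rfl] at h3
      have h1' := congrArg (Nat.cast : ℕ → ℤ) h1
      have h2' := congrArg (Nat.cast : ℕ → ℤ) h2
      have h3' := congrArg (Nat.cast : ℕ → ℤ) h3
      have h4' := congrArg (Nat.cast : ℕ → ℤ) h4
      have goal' : ((m:ℤ)+1) * (f (n+2) (m+2) : ℤ) = ((n:ℤ)+2) * (f (n+1) (m+1) : ℤ) := by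
        push_cast at h1' h2' h3' h4' ⊢
        linear_combination ((m:ℤ)+1)*h1' + ((m:ℤ)+1)*h2' - ((n:ℤ)+1)*h3' + h4'
      have := goal'
      push_cast at this
      exact_mod_cast this

lemma f_rec2 : ∀ n k, f (n+2) k = (if 1 ≤ k then f (n+1) (k-1) else 0) + (n+1) * f n k := by
  intro n k
  rw [hstep (n+1) k, f_key f h0 hstep n k, add_comm]

end fLemmas

section fLemmas2
variable (f : ℕ → ℕ → ℕ)
  (h0 : ∀ k, f 0 k = if k = 1 then 1 else 0)
  (hstep : ∀ n k, f (n + 1) k = k * f n (k + 1) + (if 1 ≤ k then f n (k - 1) else 0))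
include h0 hstep

lemma part1 : ∀ n k, f n (k + 1) =
    Nat.card {σ : Equiv.Perm (Fin n) // σ * σ = 1 ∧
      (Finset.univ.filter fun x => σ x = x).card = k} := by
  intro n
  induction n with
  | zero =>
    intro k
    rw [natCard_eq_filter, count_fin_zero, h0]
    by_cases hk : k = 0 <;> simp [hk]
  | succ n ih =>
    intro k
    rw [natCard_eq_filter, count_fin_succ, hstep n (k+1)]
    simp only [show (1:ℕ) ≤ k+1 from by omega, if_true, Nat.add_sub_cancel]
    congr 1
    · rw [ih (k+1), natCard_eq_filter]
    · cases k with
      | zero => simp [f_zero f h0 hstep]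
      | succ m =>
        rw [if_neg (by omega), ih m, natCard_eq_filter]
        norm_num

lemma part3 (t : ℕ → ℕ) (ht : ∀ n, t n = ∑ k ∈ Finset.range (n + 2), f n k) :
    ∀ n, t (n + 2) = t (n + 1) + (n + 1) * t n := by
  intro n
  rw [ht, ht, ht]
  have hsum : ∀ k ∈ Finset.range (n+4), f (n+2) k
      = (if 1 ≤ k then f (n+1) (k-1) else 0) + (n+1) * f n k :=
    fun k _ => f_rec2 f h0 hstep n k
  rw [Finset.sum_congr rfl hsum, Finset.sum_add_distrib]
  congr 1
  · rw [Finset.sum_range_succ' (fun k => if 1 ≤ k then f (n+1) (k-1) else 0) (n+3)]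
    simp
  · rw [← Finset.mul_sum]
    congr 1
    exact (Finset.sum_subset (Finset.range_subset_range.2 (by omega : n+2 ≤ n+4))
      (fun k hk hk2 => f_vanish f h0 hstep n k (by simp at hk2; omega))).symm

end fLemmas2

noncomputable section part2sec
open Polynomial

def cc (b : ℕ) : ℚ := if b % 2 = 0 then (((b/2).factorial * 2^(b/2) : ℕ) : ℚ)⁻¹ else 0

lemma cc_rec (b : ℕ) : ((b:ℚ)+2) * cc (b+2) = cc b := by
  unfold cc
  rcases Nat.even_or_odd b with hb | hb
  · obtain ⟨m, rfl⟩ := hb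
    have h1 : (m + m) % 2 = 0 := by omega
    have h2 : (m + m + 2) % 2 = 0 := by omega
    have h3 : (m + m) / 2 = m := by omega
    have h4 : (m + m + 2) / 2 = m + 1 := by omega
    rw [if_pos h1, if_pos h2, h3, h4, Nat.factorial_succ, pow_succ]
    have hm : (m.factorial : ℚ) ≠ 0 := Nat.cast_ne_zero.2 m.factorial_ne_zero
    have h2m : ((2:ℚ))^m ≠ 0 := pow_ne_zero _ two_ne_zero
    push_cast
    field_simp
    ring
  · have h1 : b % 2 = 1 := Nat.odd_iff.1 hb
    rw [if_neg (by omega), if_neg (by omega)]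
    ring

lemma cc_zero : cc 0 = 1 := by simp [cc]
lemma cc_one : cc 1 = 0 := by simp [cc]

def Spoly (n : ℕ) : Polynomial ℚ :=
  ∑ ab ∈ Finset.HasAntidiagonal.antidiagonal n,
    ((ab.1.factorial : ℚ)⁻¹ • Polynomial.X ^ ab.1) *
      (if ab.2 % 2 = 0 then (((Nat.factorial (ab.2 / 2) * 2 ^ (ab.2 / 2) : ℕ) : ℚ))⁻¹ • 1 else 0)

lemma Spoly_range (n : ℕ) :
    Spoly n = ∑ a ∈ Finset.range (n+1),
      ((a.factorial : ℚ)⁻¹ * cc (n - a)) • (Polynomial.X:Polynomial ℚ) ^ a := by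
  rw [Spoly, Finset.Nat.sum_antidiagonal_eq_sum_range_succ_mk]
  apply Finset.sum_congr rfl
  intro a _
  unfold cc
  split
  · rw [smul_mul_smul_comm, mul_one]
  · simp

lemma Spoly_zero : Spoly 0 = 1 := by
  rw [Spoly_range]
  simp [cc_zero]

lemma Spoly_one : Spoly 1 = Polynomial.X := by
  rw [Spoly_range, Finset.sum_range_succ, Finset.sum_range_one]
  norm_num [cc_zero, cc_one]

lemma fact_succ_inv (a : ℕ) : ((a+1:ℕ).factorial : ℚ)⁻¹ * ((a:ℚ)+1) = (a.factorial : ℚ)⁻¹ := by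
  rw [Nat.factorial_succ]
  have hm : (a.factorial : ℚ) ≠ 0 := Nat.cast_ne_zero.2 a.factorial_ne_zero
  push_cast
  field_simp

lemma Spoly_rec (n : ℕ) : ((n:ℚ)+2) • Spoly (n+2) = Polynomial.X * Spoly (n+1) + Spoly n := by
  rw [Spoly_range, Spoly_range, Spoly_range, Finset.smul_sum, Finset.mul_sum]
  have e1 : ∀ a, Polynomial.X * (((a.factorial : ℚ)⁻¹ * cc (n + 1 - a)) • (Polynomial.X:Polynomial ℚ) ^ a)
      = (((a.factorial : ℚ)⁻¹ * cc (n + 1 - a)) • (Polynomial.X:Polynomial ℚ) ^ (a+1)) := by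
    intro a
    rw [mul_smul_comm, ← pow_succ']
  simp only [e1]
  -- reindex first sum on the right
  have e2 : (∑ a ∈ Finset.range (n+2),
        (((a.factorial : ℚ)⁻¹ * cc (n + 1 - a)) • (Polynomial.X:Polynomial ℚ) ^ (a+1)))
      = ∑ a ∈ Finset.range (n+3),
        (if a = 0 then 0 else (((a-1).factorial : ℚ)⁻¹ * cc (n + 2 - a))) • (Polynomial.X:Polynomial ℚ) ^ a := by
    rw [Finset.sum_range_succ' (fun a => (if a = 0 then (0:ℚ) else (((a-1).factorial : ℚ)⁻¹ * cc (n + 2 - a))) • (Polynomial.X:Polynomial ℚ) ^ a) (n+2)]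
    simp only [Nat.add_sub_cancel, Nat.succ_ne_zero, if_false, if_pos rfl, if_true, zero_smul, add_zero]
    apply Finset.sum_congr rfl
    intro a _
    rw [show n + 2 - (a+1) = n + 1 - a from by omega]
  have e3 : (∑ a ∈ Finset.range (n+1),
        (((a.factorial : ℚ)⁻¹ * cc (n - a)) • (Polynomial.X:Polynomial ℚ) ^ a))
      = ∑ a ∈ Finset.range (n+3),
        (if a ≤ n then ((a.factorial : ℚ)⁻¹ * cc (n - a)) else 0) • (Polynomial.X:Polynomial ℚ) ^ a := by
    calc (∑ a ∈ Finset.range (n+1),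
          (((a.factorial : ℚ)⁻¹ * cc (n - a)) • (Polynomial.X:Polynomial ℚ) ^ a))
        = ∑ a ∈ Finset.range (n+1),
          (if a ≤ n then ((a.factorial : ℚ)⁻¹ * cc (n - a)) else 0) • (Polynomial.X:Polynomial ℚ) ^ a := by
          apply Finset.sum_congr rfl
          intro a ha
          rw [if_pos (by simp only [Finset.mem_range] at ha; omega)]
      _ = ∑ a ∈ Finset.range (n+3),
          (if a ≤ n then ((a.factorial : ℚ)⁻¹ * cc (n - a)) else 0) • (Polynomial.X:Polynomial ℚ) ^ a := by
          apply Finset.sum_subset (Finset.range_subset_range.2 (by omega : n+1 ≤ n+3))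
          intro a _ ha
          rw [if_neg (by simp only [Finset.mem_range, not_lt] at ha; omega), zero_smul]
  rw [e2, e3, ← Finset.sum_add_distrib]
  apply Finset.sum_congr rfl
  intro a ha
  rw [smul_smul, ← add_smul]
  congr 1
  simp only [Finset.mem_range] at ha
  rcases Nat.eq_zero_or_pos a with rfl | hpos
  · simp only [if_pos rfl, if_pos (Nat.zero_le n), zero_add, Nat.sub_zero]
    rw [Nat.factorial_zero]
    norm_num
    exact cc_rec n
  · rcases Nat.lt_or_ge a (n+1) with hle | hgt
    · -- 1 ≤ a ≤ n
      obtain ⟨b, hb⟩ : ∃ b, n - a = b := ⟨n - a, rfl⟩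
      have hab : a + b = n := by omega
      have h1 : n + 2 - a = b + 2 := by omega
      rw [if_neg (by omega), if_pos (by omega), h1, hb]
      obtain ⟨a', rfl⟩ : ∃ a', a = a' + 1 := ⟨a - 1, by omega⟩
      rw [Nat.add_sub_cancel]
      have key := cc_rec b
      have hfa := fact_succ_inv a'
      have hcast : ((n:ℚ)+2) = (a':ℚ) + 1 + ((b:ℚ) + 2) := by
        have : a' + 1 + b = n := hab
        push_cast [← this]
        ring
      rw [hcast]
      calc ((a':ℚ) + 1 + ((b:ℚ) + 2)) * (((a'+1:ℕ).factorial : ℚ)⁻¹ * cc (b + 2))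
          = (((a'+1:ℕ).factorial : ℚ)⁻¹ * ((a':ℚ)+1)) * cc (b+2)
            + ((a'+1:ℕ).factorial : ℚ)⁻¹ * (((b:ℚ)+2) * cc (b+2)) := by ring
        _ = (a'.factorial : ℚ)⁻¹ * cc (b + 2) + ((a'+1:ℕ).factorial : ℚ)⁻¹ * cc b := by
            rw [hfa, key]
    · rcases Nat.lt_or_ge a (n+2) with h2 | h3
      · -- a = n + 1
        have ha1 : a = n + 1 := by omega
        subst ha1
        rw [if_neg (by omega), if_neg (by omega), show n + 2 - (n+1) = 1 from by omega]
        simp [cc_one]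
      · -- a = n + 2
        have ha2 : a = n + 2 := by omega
        subst ha2
        rw [if_neg (by omega), if_neg (by omega), show n + 2 - (n+2) = 0 from by omega,
          show n + 2 - 1 = n+1 from by omega]
        rw [cc_zero, add_zero, mul_one, mul_one]
        have := fact_succ_inv (n+1)
        push_cast at this ⊢
        rw [show ((n:ℚ)+2) = ((n:ℚ)+1+1) by ring, ← this]
        ring

end part2sec

section part2main
variable (f : ℕ → ℕ → ℕ)
  (h0 : ∀ k, f 0 k = if k = 1 then 1 else 0)
  (hstep : ∀ n k, f (n + 1) k = k * f n (k + 1) + (if 1 ≤ k then f n (k - 1) else 0))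
include h0 hstep

lemma p_rec (n : ℕ) :
    (∑ k ∈ Finset.range (n+4), (f (n+2) k : ℚ) • (Polynomial.X:Polynomial ℚ) ^ k)
      = (∑ k ∈ Finset.range (n+3), (f (n+1) k : ℚ) • (Polynomial.X:Polynomial ℚ) ^ (k+1))
        + ((n:ℚ)+1) • ∑ k ∈ Finset.range (n+2), (f n k : ℚ) • (Polynomial.X:Polynomial ℚ) ^ k := by
  have expand : ∀ k, (f (n+2) k : ℚ) • (Polynomial.X:Polynomial ℚ) ^ k
      = ((if 1 ≤ k then (f (n+1) (k-1) : ℚ) else 0) • (Polynomial.X:Polynomial ℚ) ^ k)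
        + (((n:ℚ)+1) * (f n k : ℚ)) • (Polynomial.X:Polynomial ℚ) ^ k := by
    intro k
    rw [← add_smul]
    congr 1
    rw [f_rec2 f h0 hstep n k]
    push_cast
    split <;> simp
  simp only [expand]
  rw [Finset.sum_add_distrib]
  congr 1
  · rw [Finset.sum_range_succ' (fun k => (if 1 ≤ k then (f (n+1) (k-1) : ℚ) else 0) • (Polynomial.X:Polynomial ℚ) ^ k) (n+3)]
    simp only [Nat.add_sub_cancel, if_pos (by omega : (1:ℕ) ≤ 1 + 0), zero_smul, add_zero]
    norm_num
  · rw [Finset.smul_sum]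
    rw [← Finset.sum_subset (Finset.range_subset_range.2 (by omega : n+2 ≤ n+4))
      (fun k _ hk => by
        rw [show f n k = 0 from f_vanish f h0 hstep n k (by simp only [Finset.mem_range, not_lt] at hk; omega)]
        simp)]
    apply Finset.sum_congr rfl
    intro k _
    rw [smul_smul]

lemma part2_poly : ∀ n, ((Nat.factorial n : ℚ)⁻¹ •
      ∑ k ∈ Finset.range (n + 2), (f n k : ℚ) • Polynomial.X ^ k)
    = Polynomial.X * Spoly n := by
  intro n
  induction n using Nat.strong_induction_on with
  | _ n ih =>
    match n with
    | 0 =>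
      rw [Spoly_zero, mul_one]
      simp [Finset.sum_range_succ, h0]
    | 1 =>
      rw [Spoly_one]
      have h10 : f 1 0 = 0 := f_zero f h0 hstep 1
      have h11 : f 1 1 = 0 := by rw [hstep]; simp [h0]
      have h12 : f 1 2 = 1 := by rw [hstep]; simp [h0]
      simp [Finset.sum_range_succ, h10, h11, h12, sq]
    | (n+2) =>
      have ih1 := ih (n+1) (by omega)
      have ih0 := ih n (by omega)
      have hfac : ((n:ℚ)+2) * ((Nat.factorial (n+2) : ℚ))⁻¹ = ((Nat.factorial (n+1) : ℚ))⁻¹ := by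
        have := fact_succ_inv (n+1)
        push_cast at this ⊢
        rw [show ((n:ℚ)+2) = ((n:ℚ)+1+1) by ring, ← this]
        ring
      have hfac2 : ((Nat.factorial n : ℚ))⁻¹ = ((n:ℚ)+1) * ((Nat.factorial (n+1) : ℚ))⁻¹ := by
        have := fact_succ_inv n
        push_cast at this ⊢
        rw [← this]
        ring
      have key : ((n:ℚ)+2) • ((Nat.factorial (n+2) : ℚ)⁻¹ •
            ∑ k ∈ Finset.range (n + 4), (f (n+2) k : ℚ) • (Polynomial.X:Polynomial ℚ) ^ k)
          = ((n:ℚ)+2) • (Polynomial.X * Spoly (n+2)) := by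
        rw [smul_smul, hfac, p_rec f h0 hstep n, smul_add]
        have lhs1 : (Nat.factorial (n+1) : ℚ)⁻¹ •
              (∑ k ∈ Finset.range (n+3), (f (n+1) k : ℚ) • (Polynomial.X:Polynomial ℚ) ^ (k+1))
            = Polynomial.X * ((Nat.factorial (n+1) : ℚ)⁻¹ •
              ∑ k ∈ Finset.range (n+3), (f (n+1) k : ℚ) • (Polynomial.X:Polynomial ℚ) ^ k) := by
          rw [mul_smul_comm, Finset.mul_sum]
          congr 1
          apply Finset.sum_congr rfl
          intro k _
          rw [mul_smul_comm, ← pow_succ']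
        have lhs2 : (Nat.factorial (n+1) : ℚ)⁻¹ •
              (((n:ℚ)+1) • ∑ k ∈ Finset.range (n+2), (f n k : ℚ) • (Polynomial.X:Polynomial ℚ) ^ k)
            = (Nat.factorial n : ℚ)⁻¹ •
              ∑ k ∈ Finset.range (n+2), (f n k : ℚ) • (Polynomial.X:Polynomial ℚ) ^ k := by
          rw [smul_smul, hfac2, mul_comm]
        rw [lhs1, lhs2, ih1, ih0, ← mul_smul_comm, Spoly_rec]
        ring
      exact smul_right_injective _ (show ((n:ℚ)+2) ≠ 0 by positivity) key

end part2main

end Aux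

open PowerSeries

theorem stmt_16 (f : ℕ → ℕ → ℕ)
    (h0 : ∀ k, f 0 k = if k = 1 then 1 else 0)
    (hstep : ∀ n k, f (n + 1) k = k * f n (k + 1) + (if 1 ≤ k then f n (k - 1) else 0))
    (t : ℕ → ℕ) (ht : ∀ n, t n = ∑ k ∈ Finset.range (n + 2), f n k) :
    (∀ n k, f n (k + 1) =
      Nat.card {σ : Equiv.Perm (Fin n) // σ * σ = 1 ∧
        (Finset.univ.filter fun x => σ x = x).card = k}) ∧
    ((mk (fun n => (Nat.factorial n : ℚ)⁻¹ •
        ∑ k ∈ Finset.range (n + 2), (f n k : ℚ) • Polynomial.X ^ k) :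
        PowerSeries (Polynomial ℚ))
      = PowerSeries.C (R := Polynomial ℚ) Polynomial.X
        * (mk fun n => (Nat.factorial n : ℚ)⁻¹ • Polynomial.X ^ n)
        * (mk fun n => if n % 2 = 0 then
            (((Nat.factorial (n / 2) * 2 ^ (n / 2) : ℕ) : ℚ))⁻¹ • 1 else 0)) ∧
    (∀ n, t (n + 2) = t (n + 1) + (n + 1) * t n) := by
  refine ⟨part1 f h0 hstep, ?_, part3 f h0 hstep t ht⟩
  ext n
  rw [coeff_mk, mul_assoc, coeff_C_mul, coeff_mul]
  simp only [coeff_mk]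
  rw [part2_poly f h0 hstep n, Spoly]
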